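/- arXiv:0904.3756 — 8 statements merged into one kernel-verified Lean document; each statement's English description precedes it below -/
import Mathlib

section
/- Given a finite list of nonnegative real numbers x_1,...,x_n with each x_i ≤ 1/2 and ∑ x_i = 1, the index set {1,...,n} can be partitioned into three subsets, each of which has sum of elements at most 1/2. -/
/-- Nonnegative reals each at most 1/2 summing to 1 can be partitioned into
three index sets each of sum at most 1/2. -/
theorem stmt_1 (n : ℕ) (x : Fin n → ℝ)
    (h0 : ∀ i, 0 ≤ x i) (h2 : ∀ i, x i ≤ 1 / 2) (hsum : ∑ i, x i = 1) :
    ∃ S₁ S₂ S₃ : Finset (Fin n),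
      Disjoint S₁ S₂ ∧ Disjoint S₁ S₃ ∧ Disjoint S₂ S₃ ∧
      S₁ ∪ S₂ ∪ S₃ = Finset.univ ∧
      (∑ i ∈ S₁, x i) ≤ 1 / 2 ∧ (∑ i ∈ S₂, x i) ≤ 1 / 2 ∧
      (∑ i ∈ S₃, x i) ≤ 1 / 2 := by
  classical
  set f : ℕ → ℝ := fun k => ∑ i ∈ Finset.univ.filter (fun i : Fin n => (i : ℕ) < k), x i
    with hf
  have hfn : ∀ m, n ≤ m → f m = 1 := by
    intro m hm
    have : Finset.univ.filter (fun i : Fin n => (i : ℕ) < m) = Finset.univ := by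
      ext i; simp; omega
    simp [hf, this, hsum]
  have hex : ∃ m, 1 / 2 < f m := ⟨n, by rw [hfn n le_rfl]; norm_num⟩
  set k₀ := Nat.find hex with hk₀
  have hk₀pos : 0 < k₀ := by
    rcases Nat.eq_zero_or_pos k₀ with h | h
    · exfalso
      have := Nat.find_spec hex
      rw [← hk₀, h] at this
      have : f 0 = 0 := by simp [hf]
      have h2 := Nat.find_spec hex
      rw [← hk₀, ‹k₀ = 0›] at h2
      rw [this] at h2; linarith
    · exact h
  set k := k₀ - 1 with hk
  have hkk : k + 1 = k₀ := by omega
  have hle : f k ≤ 1 / 2 := by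
    by_contra h
    have := Nat.find_min hex (m := k) (by omega)
    exact this (lt_of_not_ge h)
  have hgt : 1 / 2 < f (k + 1) := by rw [hkk]; exact Nat.find_spec hex
  have hkn : k < n := by
    by_contra h
    rw [hfn k (by omega)] at hle; linarith
  refine ⟨Finset.univ.filter (fun i : Fin n => (i : ℕ) < k), {⟨k, hkn⟩},
    Finset.univ.filter (fun i : Fin n => k < (i : ℕ)), ?_, ?_, ?_, ?_, ?_, ?_, ?_⟩
  · simp [Finset.disjoint_left, Fin.ext_iff]; omega
  · simp [Finset.disjoint_left]; omega
  · simp [Finset.disjoint_left, Fin.ext_iff]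
  · ext i
    simp only [Finset.mem_union, Finset.mem_filter, Finset.mem_univ, true_and,
      Finset.mem_singleton, iff_true]
    rcases lt_trichotomy (i : ℕ) k with h | h | h
    · tauto
    · exact Or.inl (Or.inr (Fin.ext h))
    · tauto
  · exact hle
  · simpa using h2 ⟨k, hkn⟩
  · have hsplit : f (k + 1) + ∑ i ∈ Finset.univ.filter (fun i : Fin n => k < (i : ℕ)), x i
        = 1 := by
      rw [hf, ← hsum]
      rw [← Finset.sum_union]
      · congr 1
        ext i; simp; omega
      · simp [Finset.disjoint_left]
    linarith
end

section
/- Let x_1,...,x_n be positive integers with ∑ x_i ≥ k for a positive integer k. Then there exists a partition of {1,...,n} into nonempty subsets S_1,...,S_m such that every subset satisfies ∑_{i∈S_j} x_i ≥ k, and every subset satisfies ∑_{i∈S_j} x_i ≤ max(k - 1 + max_i x_i, 3k - 3). -/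
open Finset

lemma key_aux (n k : ℕ) (x : Fin n → ℕ) (hk : 0 < k) :
    ∀ T : Finset (Fin n), k ≤ ∑ i ∈ T, x i →
      ∃ P : Finpartition T, ∀ S ∈ P.parts, (k ≤ ∑ i ∈ S, x i) ∧
        (∑ i ∈ S, x i ≤ max (k - 1 + Finset.univ.sup x) (3 * k - 3)) := by
  intro T
  induction T using Finset.strongInductionOn with
  | _ T ih =>
    intro hT
    set M := (Finset.univ : Finset (Fin n)).sup x with hM
    set B := max (k - 1 + M) (3 * k - 3) with hB
    have hTne : T ≠ ∅ := by
      intro h; rw [h, Finset.sum_empty] at hT; omega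
    by_cases hle : ∑ i ∈ T, x i ≤ B
    · refine ⟨Finpartition.indiscrete hTne, ?_⟩
      intro S hS
      simp only [Finpartition.indiscrete_parts, Finset.mem_singleton] at hS
      subst hS; exact ⟨hT, hle⟩
    · push_neg at hle
      -- find S ⊆ T, k ≤ sum S ≤ B, k ≤ sum (T \ S)
      have hsplit : ∃ S : Finset (Fin n), S ⊆ T ∧ S.Nonempty ∧
          k ≤ ∑ i ∈ S, x i ∧ (∑ i ∈ S, x i) ≤ B ∧ k ≤ ∑ i ∈ T \ S, x i := by
        by_cases hbig : ∃ i ∈ T, k ≤ x i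
        · obtain ⟨i, hiT, hki⟩ := hbig
          have hxM : x i ≤ M := Finset.le_sup (Finset.mem_univ i)
          have hsub : {i} ⊆ T := Finset.singleton_subset_iff.mpr hiT
          have hsd : ∑ j ∈ T \ {i}, x j + ∑ j ∈ {i}, x j = ∑ j ∈ T, x j :=
            Finset.sum_sdiff hsub
          rw [Finset.sum_singleton] at hsd
          have hB1 : k - 1 + M ≤ B := le_max_left _ _
          refine ⟨{i}, hsub, Finset.singleton_nonempty i, ?_, ?_, ?_⟩
          · rw [Finset.sum_singleton]; exact hki
          · rw [Finset.sum_singleton]; omega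
          · omega
        · push_neg at hbig
          -- all items in T are ≤ k-1; pick minimal-card S with sum ≥ k
          set 𝒮 := T.powerset.filter (fun S => k ≤ ∑ i ∈ S, x i) with h𝒮
          have h𝒮ne : 𝒮.Nonempty :=
            ⟨T, Finset.mem_filter.mpr ⟨Finset.mem_powerset.mpr (Finset.Subset.refl T), hT⟩⟩
          obtain ⟨S, hS𝒮, hmin⟩ := Finset.exists_min_image 𝒮 Finset.card h𝒮ne
          rw [h𝒮, Finset.mem_filter, Finset.mem_powerset] at hS𝒮
          obtain ⟨hST, hkS⟩ := hS𝒮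
          have hSne : S.Nonempty := by
            rcases Finset.eq_empty_or_nonempty S with h | h
            · rw [h, Finset.sum_empty] at hkS; omega
            · exact h
          obtain ⟨i, hiS⟩ := hSne
          have hxk : x i ≤ k - 1 := by
            have := hbig i (hST hiS); omega
          have hless : ∑ j ∈ S.erase i, x j < k := by
            by_contra h
            push_neg at h
            have hmem : S.erase i ∈ 𝒮 := by
              rw [h𝒮, Finset.mem_filter, Finset.mem_powerset]
              exact ⟨(Finset.erase_subset i S).trans hST, h⟩
            have := hmin _ hmem
            have hlt : (S.erase i).card < S.card := Finset.card_erase_lt_of_mem hiS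
            omega
          have hsum_erase' : x i + ∑ j ∈ S.erase i, x j = ∑ j ∈ S, x j :=
            Finset.add_sum_erase S x hiS
          have hSle : ∑ j ∈ S, x j ≤ 2 * k - 2 := by omega
          have hB2 : 3 * k - 3 ≤ B := le_max_right _ _
          have hsd : ∑ j ∈ T \ S, x j + ∑ j ∈ S, x j = ∑ j ∈ T, x j :=
            Finset.sum_sdiff hST
          refine ⟨S, hST, ⟨i, hiS⟩, hkS, by omega, by omega⟩
      obtain ⟨S, hST, hSne, hkS, hSB, hkrest⟩ := hsplit
      have hssub : T \ S ⊂ T := by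
        apply Finset.sdiff_ssubset hST hSne
      obtain ⟨P, hP⟩ := ih (T \ S) hssub hkrest
      have hdisj : Disjoint (T \ S) S := Finset.sdiff_disjoint
      have hunion : (T \ S) ⊔ S = T := by
        rw [Finset.sup_eq_union, Finset.sdiff_union_of_subset hST]
      refine ⟨P.extend (by simpa [Finset.bot_eq_empty] using hSne.ne_empty) hdisj hunion, ?_⟩
      intro U hU
      rw [Finpartition.extend_parts, Finset.mem_insert] at hU
      rcases hU with h | h
      · subst h; exact ⟨hkS, hSB⟩
      · exact hP U h

/-- Min-Max Bin Covering: existence of a feasible packing with cost at most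
`max (k - 1 + max_i x_i) (3k - 3)` (Next Fit guarantee). -/
theorem stmt_2 (n k : ℕ) (x : Fin n → ℕ) (hx : ∀ i, 0 < x i)
    (hk : 0 < k) (hsum : k ≤ ∑ i, x i) :
    ∃ P : Finpartition (Finset.univ : Finset (Fin n)),
      ∀ S ∈ P.parts, (k ≤ ∑ i ∈ S, x i) ∧
        (∑ i ∈ S, x i ≤ max (k - 1 + Finset.univ.sup x) (3 * k - 3)) := by
  exact key_aux n k x hk Finset.univ hsum
end

section
/- Let T be a finite tree with nonnegative integer vertex weights and maximum degree d, and let k be a positive integer. Suppose no edge e of T has the property that both components of T − e have total weight at least k. Then the total weight of T is at most κ + d(k−1), where κ = max(k, maximum vertex weight in T). -/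
open scoped Classical in
/-- The weight of the component containing `u` after deleting edge `s(u,v)`. -/
noncomputable def sideWeight {V : Type*} [Fintype V] (G : SimpleGraph V)
    (w : V → ℕ) (u v : V) : ℕ :=
  ∑ a ∈ Finset.univ.filter
      (fun a => (G.deleteEdges {s(u, v)}).Reachable u a), w a

open scoped Classical in
/-- The component containing `u` after deleting edge `s(u,v)`, as a finset. -/
noncomputable def sideF {V : Type*} [Fintype V] (G : SimpleGraph V)
    (u v : V) : Finset V :=
  Finset.univ.filter (fun a => (G.deleteEdges {s(u, v)}).Reachable u a)

lemma sideWeight_eq_sum {V : Type*} [Fintype V] (G : SimpleGraph V)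
    (w : V → ℕ) (u v : V) : sideWeight G w u v = ∑ a ∈ sideF G u v, w a := rfl

open scoped Classical in
lemma mem_sideF {V : Type*} [Fintype V] (G : SimpleGraph V) {u v a : V} :
    a ∈ sideF G u v ↔ (G.deleteEdges {s(u, v)}).Reachable u a := by
  simp [sideF]

section Tree
variable {V : Type*} [Fintype V] {G : SimpleGraph V}

/-- Every edge of a tree is a bridge. -/
lemma tree_bridge (hT : G.IsTree) {x u : V} (h : G.Adj x u) :
    ¬ (G.deleteEdges {s(x, u)}).Reachable x u := by
  have hb := (SimpleGraph.isAcyclic_iff_forall_adj_isBridge.mp hT.IsAcyclic) h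
  rw [SimpleGraph.isBridge_iff] at hb
  exact hb

lemma not_mem_support (hT : G.IsTree) {x u a : V} (h : G.Adj x u)
    (p : (G.deleteEdges {s(x, u)}).Walk x a) : u ∉ p.support := by
  classical
  intro hu
  exact tree_bridge hT h ⟨p.takeUntil u hu⟩

/-- Every vertex other than `u` lies in the side of some neighbor. -/
lemma cover (hT : G.IsTree) {u a : V} (ha : a ≠ u) :
    ∃ x, G.Adj u x ∧ (G.deleteEdges {s(x, u)}).Reachable x a := by
  classical
  obtain ⟨p0⟩ := hT.isConnected.preconnected u a
  have hp := p0.toPath.2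
  set p := p0.toPath.1 with hpdef
  clear_value p
  cases p with
  | nil => exact absurd rfl ha.symm
  | @cons _ x _ h q =>
    rw [SimpleGraph.Walk.cons_isPath_iff] at hp
    refine ⟨x, h, ⟨q.toDeleteEdges _ ?_⟩⟩
    intro e he hes
    apply hp.2
    rw [Set.mem_singleton_iff] at hes
    subst hes
    exact q.snd_mem_support_of_mem_edges he

/-- If `x ≠ v` is a neighbor of `u`, then side of `x` (w.r.t. edge `xu`) is
contained in side of `u` (w.r.t. edge `uv`). -/
lemma side_subset (hT : G.IsTree) {u v x a : V} (huv : G.Adj u v) (hux : G.Adj u x)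
    (hxv : x ≠ v) (hr : (G.deleteEdges {s(x, u)}).Reachable x a) :
    (G.deleteEdges {s(u, v)}).Reachable u a := by
  classical
  obtain ⟨p⟩ := hr
  have hu : u ∉ p.support := not_mem_support hT hux.symm p
  have hv : v ∉ p.support := by
    intro hv
    have hadjuv : (G.deleteEdges {s(x, u)}).Adj v u := by
      rw [SimpleGraph.deleteEdges_adj]
      refine ⟨huv.symm, ?_⟩
      simp only [Set.mem_singleton_iff, Sym2.eq_iff]
      rintro (⟨h1, -⟩ | ⟨h1, -⟩)
      · exact hxv h1.symm
      · exact huv.ne h1.symm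
    exact tree_bridge hT hux.symm ⟨(p.takeUntil v hv).append hadjuv.toWalk⟩
  have hedges : ∀ e ∈ p.edges, e ∈ (G.deleteEdges {s(u, v)}).edgeSet := by
    intro e he
    have h1 : e ∈ (G.deleteEdges {s(x, u)}).edgeSet := p.edges_subset_edgeSet he
    rw [SimpleGraph.edgeSet_deleteEdges] at h1 ⊢
    refine ⟨h1.1, ?_⟩
    simp only [Set.mem_singleton_iff]
    intro hev
    subst hev
    exact hv (p.snd_mem_support_of_mem_edges he)
  have hadjux : (G.deleteEdges {s(u, v)}).Adj u x := by
    rw [SimpleGraph.deleteEdges_adj]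
    refine ⟨hux, ?_⟩
    simp only [Set.mem_singleton_iff, Sym2.eq_iff]
    rintro (⟨-, h2⟩ | ⟨h1, -⟩)
    · exact hxv h2
    · exact huv.ne h1
  exact ⟨SimpleGraph.Walk.cons hadjux (p.transfer _ hedges)⟩

/-- Sides of distinct neighbors are disjoint. -/
lemma side_disjoint (hT : G.IsTree) {u x y a : V} (hux : G.Adj u x) (huy : G.Adj u y)
    (hxy : x ≠ y) (hx : (G.deleteEdges {s(x, u)}).Reachable x a)
    (hy : (G.deleteEdges {s(y, u)}).Reachable y a) : False := by
  classical
  obtain ⟨p0⟩ := hx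
  obtain ⟨q0⟩ := hy
  set p := p0.toPath.1 with hpdef
  have hp : p.IsPath := p0.toPath.2
  clear_value p
  set q := q0.toPath.1 with hqdef
  have hq : q.IsPath := q0.toPath.2
  clear_value q
  have hup : u ∉ p.support := not_mem_support hT hux.symm p
  have huq : u ∉ q.support := not_mem_support hT huy.symm q
  have hpe : ∀ e ∈ p.edges, e ∈ G.edgeSet :=
    fun e he => SimpleGraph.edgeSet_mono (G.deleteEdges_le _) (p.edges_subset_edgeSet he)
  have hqe : ∀ e ∈ q.edges, e ∈ G.edgeSet :=
    fun e he => SimpleGraph.edgeSet_mono (G.deleteEdges_le _) (q.edges_subset_edgeSet he)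
  set P : G.Walk u a := SimpleGraph.Walk.cons hux (p.transfer G hpe) with hP
  set Q : G.Walk u a := SimpleGraph.Walk.cons huy (q.transfer G hqe) with hQ
  have hPp : P.IsPath := by
    rw [hP, SimpleGraph.Walk.cons_isPath_iff]
    exact ⟨hp.transfer _, by rwa [SimpleGraph.Walk.support_transfer]⟩
  have hQp : Q.IsPath := by
    rw [hQ, SimpleGraph.Walk.cons_isPath_iff]
    exact ⟨hq.transfer _, by rwa [SimpleGraph.Walk.support_transfer]⟩
  obtain ⟨R, -, hRu⟩ := hT.existsUnique_path u a
  have hPQ : P = Q := (hRu P hPp).trans (hRu Q hQp).symm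
  apply hxy
  have := congrArg (fun W : G.Walk u a => W.getVert 1) hPQ
  simpa [hP, hQ, SimpleGraph.Walk.getVert_cons_succ, SimpleGraph.Walk.getVert_zero]
    using this

open scoped Classical in
/-- Decomposition of the total weight at a vertex. -/
lemma sum_decomp (hT : G.IsTree) [DecidableRel G.Adj] (w : V → ℕ) (u : V) :
    ∑ v, w v = w u + ∑ x ∈ G.neighborFinset u, sideWeight G w x u := by
  have hub : u ∉ (G.neighborFinset u).biUnion (fun x => sideF G x u) := by
    simp only [Finset.mem_biUnion, not_exists]
    rintro x ⟨hx1, hx2⟩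
    rw [SimpleGraph.mem_neighborFinset] at hx1
    rw [mem_sideF] at hx2
    exact tree_bridge hT hx1.symm hx2
  have huniv : (Finset.univ : Finset V) =
      insert u ((G.neighborFinset u).biUnion (fun x => sideF G x u)) := by
    ext a
    simp only [Finset.mem_univ, true_iff, Finset.mem_insert, Finset.mem_biUnion]
    by_cases ha : a = u
    · exact Or.inl ha
    · obtain ⟨x, hx1, hx2⟩ := cover hT ha
      exact Or.inr ⟨x, (SimpleGraph.mem_neighborFinset _ _ _).mpr hx1, (mem_sideF G).mpr hx2⟩
  rw [huniv, Finset.sum_insert hub, Finset.sum_biUnion]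
  · simp only [sideWeight_eq_sum]
  · intro x hx y hy hxy
    simp only [Finset.mem_coe, SimpleGraph.mem_neighborFinset] at hx hy
    simp only [Function.onFun]
    rw [Finset.disjoint_left]
    intro a hax hay
    rw [mem_sideF] at hax hay
    exact side_disjoint hT hx hy hxy hax hay

end Tree

/-- If no edge of the weighted tree `T` splits it into two parts each of weight
at least `k`, then the total weight is at most `κ + d(k-1)` where `d` bounds
the degrees and `κ = max k (max vertex weight)`. -/
theorem stmt_4 {V : Type*} [Fintype V] (G : SimpleGraph V) [DecidableRel G.Adj]
    (hT : G.IsTree) (w : V → ℕ) (d k : ℕ) (hk : 0 < k)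
    (hdeg : ∀ v, G.degree v ≤ d)
    (hnosplit : ∀ u v, G.Adj u v →
      ¬ (k ≤ sideWeight G w u v ∧ k ≤ sideWeight G w v u)) :
    ∑ v, w v ≤ max k (Finset.univ.sup w) + d * (k - 1) := by
  classical
  -- there is a vertex all of whose sides are light
  have key : ∃ u : V, ∀ x, G.Adj u x → sideWeight G w x u ≤ k - 1 := by
    set S : Finset (V × V) :=
      Finset.univ.filter (fun p => G.Adj p.1 p.2 ∧ k ≤ sideWeight G w p.1 p.2) with hS
    by_cases hSe : S.Nonempty
    · obtain ⟨p₀, hp₀S, hmin⟩ := S.exists_min_image (fun p => (sideF G p.1 p.2).card) hSe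
      obtain ⟨u, v⟩ := p₀
      simp only [hS, Finset.mem_filter, Finset.mem_univ, true_and] at hp₀S
      obtain ⟨huv, hkuv⟩ := hp₀S
      refine ⟨u, fun x hux => ?_⟩
      by_cases hxv : x = v
      · subst hxv
        have := hnosplit u x huv
        push_neg at this
        have := this hkuv
        omega
      · by_contra hcon
        push_neg at hcon
        have hkx : k ≤ sideWeight G w x u := by omega
        have hmem : (x, u) ∈ S := by
          simp only [hS, Finset.mem_filter, Finset.mem_univ, true_and]
          exact ⟨hux.symm, hkx⟩
        have hle := hmin (x, u) hmem
        have hsub : sideF G x u ⊂ sideF G u v := by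
          rw [Finset.ssubset_iff_of_subset]
          · exact ⟨u, (mem_sideF G).mpr (SimpleGraph.Reachable.refl u),
              fun h => tree_bridge hT hux.symm ((mem_sideF G).mp h)⟩
          · intro a ha
            rw [mem_sideF] at ha ⊢
            exact side_subset hT huv hux hxv ha
        exact absurd (Finset.card_lt_card hsub) (not_lt.mpr hle)
    · have : Nonempty V := hT.isConnected.nonempty
      refine ⟨Classical.arbitrary V, fun x hux => ?_⟩
      by_contra hcon
      push_neg at hcon
      have hkx : k ≤ sideWeight G w x (Classical.arbitrary V) := by omega
      exact hSe ⟨(x, Classical.arbitrary V), by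
        simp only [hS, Finset.mem_filter, Finset.mem_univ, true_and]
        exact ⟨hux.symm, hkx⟩⟩
  obtain ⟨u, hu⟩ := key
  rw [sum_decomp hT w u]
  have h1 : w u ≤ max k (Finset.univ.sup w) :=
    le_trans (Finset.le_sup (Finset.mem_univ u)) (le_max_right _ _)
  have h2 : ∑ x ∈ G.neighborFinset u, sideWeight G w x u ≤ d * (k - 1) := by
    calc ∑ x ∈ G.neighborFinset u, sideWeight G w x u
        ≤ (G.neighborFinset u).card * (k - 1) := by
          apply Finset.sum_le_card_nsmul
          intro x hx
          exact hu x ((SimpleGraph.mem_neighborFinset _ _ _).mp hx)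
      _ ≤ d * (k - 1) := by
          apply Nat.mul_le_mul_right
          rw [SimpleGraph.card_neighborFinset_eq_degree]
          exact hdeg u
  omega
end

section
/- Orient each edge e of a finite tree T from the component of T − e with smaller total vertex weight toward the component with larger total weight (breaking ties arbitrarily but consistently). Then there exists a unique vertex v of T at which all incident edges are oriented inwards. -/
open scoped Classical in
/-- The weight of the component containing `u` after deleting edge `s(u,v)`. -/
noncomputable def sideWeightR {V : Type*} [Fintype V] (G : SimpleGraph V)
    (w : V → ℝ) (u v : V) : ℝ :=
  ∑ x ∈ Finset.univ.filter
      (fun x => (G.deleteEdges {s(u, v)}).Reachable u x), w x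

namespace StmtAux

open SimpleGraph

variable {V : Type*} [Fintype V]

open scoped Classical in
/-- The side of an edge as a finset. -/
noncomputable def sideFinset (G : SimpleGraph V) (u v : V) : Finset V :=
  Finset.univ.filter (fun x => (G.deleteEdges {s(u, v)}).Reachable u x)

open scoped Classical in
lemma sideWeightR_eq (G : SimpleGraph V) (w : V → ℝ) (u v : V) :
    sideWeightR G w u v = ∑ x ∈ sideFinset G u v, w x := rfl

lemma delete_delete_le (G : SimpleGraph V) (s t : Set (Sym2 V)) :
    (G.deleteEdges s).deleteEdges t ≤ G.deleteEdges t := by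
  simp only [SimpleGraph.deleteEdges]
  exact sdiff_le_sdiff_right sdiff_le

/-- If a walk avoids the vertex `b`, its endpoints stay reachable after
deleting any edge incident to `b`. -/
lemma reach_delete_of_not_mem_support {H : SimpleGraph V} {a x : V} (b c : V)
    (p : H.Walk a x) (hb : b ∉ p.support) :
    (H.deleteEdges {s(b, c)}).Reachable a x := by
  induction p with
  | nil => exact Reachable.refl _
  | @cons u y z h q ih =>
    rw [SimpleGraph.Walk.support_cons, List.mem_cons] at hb
    push_neg at hb
    have hby : b ≠ y := by
      intro he; exact hb.2 (he ▸ q.start_mem_support)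
    have hadj : (H.deleteEdges {s(b, c)}).Adj u y := by
      rw [SimpleGraph.deleteEdges_adj]
      refine ⟨h, ?_⟩
      intro he
      rw [Set.mem_singleton_iff, Sym2.eq_iff] at he
      rcases he with ⟨h1', h2'⟩ | ⟨h1', h2'⟩
      · exact hb.1 h1'.symm
      · exact hby h2'.symm
    exact hadj.reachable.trans (ih hb.2)

lemma tree_bridge {G : SimpleGraph V} (hT : G.IsTree) {u v : V} (h : G.Adj u v) :
    ¬ (G.deleteEdges {s(u, v)}).Reachable u v :=
  ((isAcyclic_iff_forall_adj_isBridge.mp hT.IsAcyclic) h)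

/-- Key nesting lemma: if `a-b-c` is a path (with `a ≠ c`), the `a`-side of
edge `ab` is contained in the `b`-side of edge `bc`. -/
lemma side_subset {G : SimpleGraph V} (hT : G.IsTree) {a b c x : V}
    (hab : G.Adj a b) (hbc : G.Adj b c) (hac : a ≠ c)
    (hx : (G.deleteEdges {s(a, b)}).Reachable a x) :
    (G.deleteEdges {s(b, c)}).Reachable b x := by
  classical
  obtain ⟨p⟩ := hx
  have hbsup : b ∉ p.support := by
    intro hb
    exact tree_bridge hT hab ⟨p.takeUntil b hb⟩
  have h1 := reach_delete_of_not_mem_support b c p hbsup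
  have h2 : (G.deleteEdges {s(b, c)}).Reachable a x :=
    h1.mono (delete_delete_le G _ _)
  have hba : (G.deleteEdges {s(b, c)}).Adj b a := by
    rw [SimpleGraph.deleteEdges_adj]
    refine ⟨hab.symm, ?_⟩
    intro he
    rw [Set.mem_singleton_iff, Sym2.eq_iff] at he
    rcases he with ⟨h1', h2'⟩ | ⟨h1', h2'⟩
    · exact hac h2'
    · exact hbc.ne h1'
  exact hba.reachable.trans h2

open scoped Classical in
lemma sideFinset_subset {G : SimpleGraph V} (hT : G.IsTree) {a b c : V}
    (hab : G.Adj a b) (hbc : G.Adj b c) (hac : a ≠ c) :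
    sideFinset G a b ⊆ sideFinset G b c := by
  intro x hx
  rw [sideFinset, Finset.mem_filter] at hx ⊢
  exact ⟨Finset.mem_univ x, side_subset hT hab hbc hac hx.2⟩

lemma sideWeight_mono {G : SimpleGraph V} (hT : G.IsTree) {a b c : V}
    (w' : V → ℝ) (hw' : ∀ v, 0 ≤ w' v)
    (hab : G.Adj a b) (hbc : G.Adj b c) (hac : a ≠ c) :
    sideWeightR G w' a b ≤ sideWeightR G w' b c := by
  rw [sideWeightR_eq, sideWeightR_eq]
  exact Finset.sum_le_sum_of_subset_of_nonneg (sideFinset_subset hT hab hbc hac)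
    (fun i _ _ => hw' i)

open scoped Classical in
lemma mem_sideFinset {G : SimpleGraph V} {u v x : V} :
    x ∈ sideFinset G u v ↔ (G.deleteEdges {s(u, v)}).Reachable u x := by
  rw [sideFinset, Finset.mem_filter]
  simp

lemma self_mem_sideFinset {G : SimpleGraph V} (u v : V) : u ∈ sideFinset G u v :=
  mem_sideFinset.mpr (Reachable.refl u)

lemma not_mem_sideFinset {G : SimpleGraph V} (hT : G.IsTree) {u v : V}
    (h : G.Adj u v) : v ∉ sideFinset G u v := by
  rw [mem_sideFinset]
  exact tree_bridge hT h

lemma sideFinset_card_lt {G : SimpleGraph V} (hT : G.IsTree) {a b c : V}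
    (hab : G.Adj a b) (hbc : G.Adj b c) (hac : a ≠ c) :
    (sideFinset G a b).card < (sideFinset G b c).card := by
  apply Finset.card_lt_card
  refine ⟨sideFinset_subset hT hab hbc hac, fun hsub => ?_⟩
  have : b ∈ sideFinset G a b := hsub (self_mem_sideFinset b c)
  exact not_mem_sideFinset hT hab this

end StmtAux

open StmtAux SimpleGraph in
/-- Orient each edge of a finite weighted tree from its lighter side to its
heavier side, breaking ties consistently (via a fixed tie-free nonnegative
perturbation `w'` of the weights).  Then there is a unique vertex all of whose
incident edges are oriented inwards. -/
theorem stmt_6 {V : Type*} [Fintype V] (G : SimpleGraph V)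
    (hT : G.IsTree) (w : V → ℝ) (hw : ∀ v, 0 ≤ w v)
    (o : V → V → Prop)
    (w' : V → ℝ) (hw' : ∀ v, 0 ≤ w' v)
    (hcons : ∀ u v, G.Adj u v → sideWeightR G w u v < sideWeightR G w v u →
      sideWeightR G w' u v < sideWeightR G w' v u)
    (hties : ∀ u v, G.Adj u v → sideWeightR G w' u v ≠ sideWeightR G w' v u)
    (ho : ∀ u v, G.Adj u v →
      (o u v ↔ sideWeightR G w' u v < sideWeightR G w' v u)) :
    ∃! v : V, ∀ u, G.Adj u v → o u v := by
  classical
  -- From "not oriented u → v" deduce "oriented v → u".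
  have flip : ∀ u v, G.Adj u v → ¬ o u v →
      sideWeightR G w' v u < sideWeightR G w' u v := by
    intro u v h hno
    rcases lt_or_gt_of_ne (hties u v h) with h' | h'
    · exact absurd ((ho u v h).mpr h') hno
    · exact h'
  -- Claim D: no vertex on the light side of an oriented edge is a sink.
  have D : ∀ n : ℕ, ∀ u v x : V, G.Adj u v →
      sideWeightR G w' u v < sideWeightR G w' v u →
      (sideFinset G u v).card ≤ n →
      x ∈ sideFinset G u v → (∀ z, G.Adj z x → o z x) → False := by
    intro n
    induction n with
    | zero =>
      intro u v x _ _ hcard _ _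
      have := Finset.card_pos.mpr ⟨u, self_mem_sideFinset (G := G) u v⟩
      omega
    | succ n ih =>
      intro u v x huv hlt hcard hx hsink
      by_cases hxu : x = u
      · subst hxu
        have := (ho v x huv.symm).mp (hsink v huv.symm)
        linarith
      · obtain ⟨pw⟩ := mem_sideFinset.mp hx
        obtain ⟨p, hp⟩ := pw.toPath
        cases p with
        | nil => exact hxu rfl
        | @cons _ y _ h q =>
          have husup : u ∉ q.support := (SimpleGraph.Walk.cons_isPath_iff _ _ |>.mp hp).2
          have hGuy : G.Adj u y := ((SimpleGraph.deleteEdges_adj).mp h).1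
          have hyv : y ≠ v := by
            intro he
            have := ((SimpleGraph.deleteEdges_adj).mp h).2
            rw [he] at this
            exact this rfl
          -- x is on the y-side of edge (y,u)
          have hreach : (G.deleteEdges {s(y, u)}).Reachable y x := by
            have h1 := reach_delete_of_not_mem_support u y q husup
            have h2 : (G.deleteEdges {s(u, y)}).Reachable y x :=
              h1.mono (delete_delete_le G _ _)
            rwa [Sym2.eq_swap (a := y)]
          -- edge (y,u) is oriented y → u
          have hlt' : sideWeightR G w' y u < sideWeightR G w' u y := by
            have h1 : sideWeightR G w' y u ≤ sideWeightR G w' u v :=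
              sideWeight_mono hT w' hw' hGuy.symm huv hyv
            have h2 : sideWeightR G w' v u ≤ sideWeightR G w' u y :=
              sideWeight_mono hT w' hw' huv.symm hGuy hyv.symm
            linarith
          have hcard' : (sideFinset G y u).card ≤ n := by
            have := sideFinset_card_lt hT hGuy.symm huv hyv
            omega
          exact ih y u x hGuy.symm hlt' hcard' (mem_sideFinset.mpr hreach) hsink
  -- Claim E: the heavy side of any oriented edge leads to a sink.
  have E : ∀ n : ℕ, ∀ u v : V, G.Adj u v →
      sideWeightR G w' u v < sideWeightR G w' v u →
      (sideFinset G v u).card ≤ n → ∃ x : V, ∀ z, G.Adj z x → o z x := by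
    intro n
    induction n with
    | zero =>
      intro u v _ _ hcard
      have := Finset.card_pos.mpr ⟨v, self_mem_sideFinset (G := G) v u⟩
      omega
    | succ n ih =>
      intro u v huv hlt hcard
      by_cases hsink : ∀ z, G.Adj z v → o z v
      · exact ⟨v, hsink⟩
      · push_neg at hsink
        obtain ⟨z, hz, hno⟩ := hsink
        have hlt' : sideWeightR G w' v z < sideWeightR G w' z v := flip z v hz hno
        have hzu : z ≠ u := by
          intro he; subst he; linarith
        have hcard' : (sideFinset G z v).card ≤ n := by
          have := sideFinset_card_lt hT hz huv.symm hzu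
          omega
        exact ih v z hz.symm hlt' hcard'
  -- Existence.
  have hex : ∃ x : V, ∀ z, G.Adj z x → o z x := by
    by_cases hE : ∃ a b : V, G.Adj a b
    · obtain ⟨a, b, hab⟩ := hE
      rcases lt_or_gt_of_ne (hties a b hab) with h' | h'
      · exact E (sideFinset G b a).card a b hab h' le_rfl
      · exact E (sideFinset G a b).card b a hab.symm h' le_rfl
    · push_neg at hE
      obtain ⟨x⟩ := hT.isConnected.nonempty
      exact ⟨x, fun z hz => absurd hz (hE z x)⟩
  obtain ⟨v, hv⟩ := hex
  refine ⟨v, hv, fun y hy => ?_⟩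
  by_contra hne
  -- y ≠ v is also a sink; reach a contradiction via Claim D.
  obtain ⟨pw⟩ := hT.isConnected v y
  obtain ⟨p, hp⟩ := pw.toPath
  cases p with
  | nil => exact hne rfl
  | @cons _ u _ h q =>
    have hvsup : v ∉ q.support := (SimpleGraph.Walk.cons_isPath_iff _ _ |>.mp hp).2
    have hyside : y ∈ sideFinset G u v := by
      rw [mem_sideFinset]
      have h1 := reach_delete_of_not_mem_support v u q hvsup
      rwa [Sym2.eq_swap (a := v)] at h1
    have horient : sideWeightR G w' u v < sideWeightR G w' v u :=
      (ho u v h.symm).mp (hv u h.symm)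
    exact D (sideFinset G u v).card u v y h.symm horient le_rfl hyside hy
end

section
/- Let x_1,...,x_n be positive integers and k a positive integer with ∑ x_i ≥ k. If a feasible partition for Min-Max Bin Covering exists in which the items of the last bin of the Next Fit packing (processed in decreasing order) all have size at most k/2 and total size less than k, and at least 4 bins were formed, then there exists a feasible partition with cost at most (5/2)·max(k, max_i x_i). -/
lemma exists_cut {n : ℕ} (x : Fin n → ℕ) (k : ℕ) :
    ∀ S : Finset (Fin n), k < 2 * ∑ i ∈ S, x i →
    ∃ A ⊆ S, ∃ y ∈ S, y ∉ A ∧ 2 * ∑ i ∈ A, x i ≤ k ∧ k < 2 * (∑ i ∈ A, x i + x y) := by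
  intro S
  induction S using Finset.induction_on with
  | empty => simp
  | @insert a s ha ih =>
    intro hS
    rw [Finset.sum_insert ha] at hS
    by_cases h : 2 * ∑ i ∈ s, x i ≤ k
    · exact ⟨s, Finset.subset_insert _ _, a, Finset.mem_insert_self _ _, ha, h, by omega⟩
    · obtain ⟨A, hAs, y, hys, hyA, h1, h2⟩ := ih (by omega)
      exact ⟨A, hAs.trans (Finset.subset_insert _ _), y,
        Finset.mem_insert_of_mem hys, hyA, h1, h2⟩

lemma split3 {n : ℕ} (x : Fin n → ℕ) (k : ℕ) (L : Finset (Fin n))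
    (hT : ∑ i ∈ L, x i < k) (hitem : ∀ i ∈ L, 2 * x i ≤ k) :
    ∃ A B C : Finset (Fin n), A ∪ B ∪ C = L ∧ Disjoint A B ∧ Disjoint A C ∧ Disjoint B C ∧
      2 * ∑ i ∈ A, x i ≤ k ∧ 2 * ∑ i ∈ B, x i ≤ k ∧ 2 * ∑ i ∈ C, x i ≤ k := by
  by_cases h : 2 * ∑ i ∈ L, x i ≤ k
  · exact ⟨L, ∅, ∅, by simp, by simp, by simp, by simp, h, by simp, by simp⟩
  · obtain ⟨A, hAL, y, hyL, hyA, h1, h2⟩ := exists_cut x k L (by omega)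
    have hUnion : A ∪ {y} ∪ (L \ A).erase y = L := by
      ext i
      simp only [Finset.mem_union, Finset.mem_singleton, Finset.mem_erase, Finset.mem_sdiff]
      constructor
      · rintro ((h|rfl)|⟨_,h,_⟩)
        · exact hAL h
        · exact hyL
        · exact h
      · intro hiL
        by_cases h1 : i ∈ A
        · tauto
        · by_cases h2 : i = y <;> tauto
    have hd1 : Disjoint A ({y} : Finset (Fin n)) := by simpa using hyA
    have hd2 : Disjoint A ((L \ A).erase y) :=
      (Finset.disjoint_sdiff).mono_right (Finset.erase_subset _ _)
    have hd3 : Disjoint ({y} : Finset (Fin n)) ((L \ A).erase y) := by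
      simp [Finset.disjoint_singleton_left]
    have hsum : ∑ i ∈ A, x i + x y + ∑ i ∈ (L \ A).erase y, x i = ∑ i ∈ L, x i := by
      conv_rhs => rw [← hUnion]
      rw [Finset.sum_union (by
        exact Finset.disjoint_union_left.mpr ⟨hd2, hd3⟩), Finset.sum_union hd1,
        Finset.sum_singleton]
    exact ⟨A, {y}, (L \ A).erase y, hUnion, hd1, hd2, hd3, h1,
      by simpa using hitem y hyL, by omega⟩

/-- If Next Fit (in decreasing order) on a Min-Max Bin Covering instance has
formed at least 4 bins, all complete bins having level in `[k, 2k)`, and the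
last bin has total size `< k` with all its items of size at most `k/2`, then
there is a feasible partition of cost at most `(5/2)·max k (max_i x_i)`. -/
theorem stmt_9 (n k : ℕ) (x : Fin n → ℕ) (hx : ∀ i, 0 < x i) (hk : 0 < k)
    (hsum : k ≤ ∑ i, x i)
    (B : List (Finset (Fin n)))
    (hlen : 4 ≤ B.length)
    (hdisj : B.Pairwise Disjoint)
    (hcover : ∀ i : Fin n, ∃ S ∈ B, i ∈ S)
    (hfull : ∀ S ∈ B.dropLast, (k ≤ ∑ i ∈ S, x i) ∧ (∑ i ∈ S, x i < 2 * k))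
    (hlast : ∀ S ∈ B.getLast?,
      (∑ i ∈ S, x i < k) ∧ ∀ i ∈ S, 2 * x i ≤ k) :
    ∃ P : Finpartition (Finset.univ : Finset (Fin n)),
      (∀ S ∈ P.parts, k ≤ ∑ i ∈ S, x i) ∧
      ∀ S ∈ P.parts, 2 * (∑ i ∈ S, x i) ≤ 5 * max k (Finset.univ.sup x) := by
  have hBne : B ≠ [] := by intro h; rw [h] at hlen; simp at hlen
  have hL := hlast (B.getLast hBne) (by simp [List.getLast?_eq_getLast hBne])
  set L := B.getLast hBne with hLdef
  have hB' : B.dropLast ++ [L] = B := List.dropLast_append_getLast hBne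
  have hlenD : 3 ≤ B.dropLast.length := by
    rw [List.length_dropLast]; omega
  obtain ⟨d0, d1, d2, ds, hD⟩ : ∃ d0 d1 d2 ds, B.dropLast = d0 :: d1 :: d2 :: ds := by
    rcases hE : B.dropLast with _ | ⟨d0, _ | ⟨d1, _ | ⟨d2, ds⟩⟩⟩ <;>
      rw [hE] at hlenD <;> simp at hlenD
    exact ⟨d0, d1, d2, ds, rfl⟩
  have hB2 : B = (d0 :: d1 :: d2 :: ds) ++ [L] := by
    conv_lhs => rw [← hB']
    rw [hD]
  rw [hB2] at hdisj hcover
  rw [hD] at hfull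
  -- extract disjointness facts
  simp only [List.pairwise_append, List.pairwise_cons, List.mem_append, List.mem_cons,
    List.mem_singleton] at hdisj
  obtain ⟨⟨h0, h1, h2, hds⟩, -, hDL⟩ := hdisj
  have hd0L : Disjoint d0 L := hDL d0 (by tauto) L (by tauto)
  have hd1L : Disjoint d1 L := hDL d1 (by tauto) L (by tauto)
  have hd2L : Disjoint d2 L := hDL d2 (by tauto) L (by tauto)
  have hdsL : ∀ S ∈ ds, Disjoint S L := fun S hS => hDL S (by tauto) L (by tauto)
  have hdsP : ∀ a ∈ ds, ∀ b ∈ ds, a ≠ b → Disjoint a b :=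
    fun a ha b hb hne => by
      haveI : Std.Symm (α := Finset (Fin n)) Disjoint := ⟨fun _ _ h => h.symm⟩
      exact List.Pairwise.forall hds ha hb hne
  obtain ⟨A, Bb, C, hU, hAB, hAC, hBC, hA2, hBb2, hC2⟩ := split3 x k L hL.1 hL.2
  have hA_L : A ⊆ L := by rw [← hU]; exact Finset.subset_union_left.trans Finset.subset_union_left
  have hB_L : Bb ⊆ L := by rw [← hU]; exact Finset.subset_union_right.trans Finset.subset_union_left
  have hC_L : C ⊆ L := by rw [← hU]; exact Finset.subset_union_right
  set parts : Finset (Finset (Fin n)) :=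
    insert (d0 ∪ A) (insert (d1 ∪ Bb) (insert (d2 ∪ C) ds.toFinset)) with hparts
  have hmem : ∀ S, S ∈ parts ↔ S = d0 ∪ A ∨ S = d1 ∪ Bb ∨ S = d2 ∪ C ∨ S ∈ ds := by
    intro S; simp [hparts, List.mem_toFinset]
  -- disjointness of the new parts
  have hd0A : Disjoint d0 A := hd0L.mono_right hA_L
  have hd1B : Disjoint d1 Bb := hd1L.mono_right hB_L
  have hd2C : Disjoint d2 C := hd2L.mono_right hC_L
  have D01 : Disjoint (d0 ∪ A) (d1 ∪ Bb) := by
    rw [Finset.disjoint_union_left, Finset.disjoint_union_right, Finset.disjoint_union_right]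
    exact ⟨⟨h0 d1 (by tauto), hd0L.mono_right hB_L⟩,
      ⟨(hd1L.mono_right hA_L).symm, hAB⟩⟩
  have D02 : Disjoint (d0 ∪ A) (d2 ∪ C) := by
    rw [Finset.disjoint_union_left, Finset.disjoint_union_right, Finset.disjoint_union_right]
    exact ⟨⟨h0 d2 (by tauto), hd0L.mono_right hC_L⟩,
      ⟨(hd2L.mono_right hA_L).symm, hAC⟩⟩
  have D12 : Disjoint (d1 ∪ Bb) (d2 ∪ C) := by
    rw [Finset.disjoint_union_left, Finset.disjoint_union_right, Finset.disjoint_union_right]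
    exact ⟨⟨h1 d2 (by tauto), hd1L.mono_right hC_L⟩,
      ⟨(hd2L.mono_right hB_L).symm, hBC⟩⟩
  have D0s : ∀ S ∈ ds, Disjoint (d0 ∪ A) S := fun S hS => by
    rw [Finset.disjoint_union_left]
    exact ⟨h0 S (by tauto), ((hdsL S hS).mono_right hA_L).symm⟩
  have D1s : ∀ S ∈ ds, Disjoint (d1 ∪ Bb) S := fun S hS => by
    rw [Finset.disjoint_union_left]
    exact ⟨h1 S (by tauto), ((hdsL S hS).mono_right hB_L).symm⟩
  have D2s : ∀ S ∈ ds, Disjoint (d2 ∪ C) S := fun S hS => by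
    rw [Finset.disjoint_union_left]
    exact ⟨h2 S hS, ((hdsL S hS).mono_right hC_L).symm⟩
  -- sums over the merged parts
  have hs0 : ∑ i ∈ d0 ∪ A, x i = ∑ i ∈ d0, x i + ∑ i ∈ A, x i := Finset.sum_union hd0A
  have hs1 : ∑ i ∈ d1 ∪ Bb, x i = ∑ i ∈ d1, x i + ∑ i ∈ Bb, x i := Finset.sum_union hd1B
  have hs2 : ∑ i ∈ d2 ∪ C, x i = ∑ i ∈ d2, x i + ∑ i ∈ C, x i := Finset.sum_union hd2C
  have hf0 := hfull d0 (by simp)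
  have hf1 := hfull d1 (by simp)
  have hf2 := hfull d2 (by simp)
  have hfs : ∀ S ∈ ds, k ≤ ∑ i ∈ S, x i ∧ ∑ i ∈ S, x i < 2 * k :=
    fun S hS => hfull S (by simp [hS])
  refine ⟨⟨parts, ?_, ?_, ?_⟩, ?_, ?_⟩
  · -- supIndep
    apply Finset.supIndep_iff_pairwiseDisjoint.mpr
    intro a ha b hb hne
    rw [Finset.mem_coe, hmem] at ha hb
    rcases ha with rfl | rfl | rfl | ha <;> rcases hb with rfl | rfl | rfl | hb
    · exact absurd rfl hne
    · exact D01
    · exact D02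
    · exact D0s _ hb
    · exact D01.symm
    · exact absurd rfl hne
    · exact D12
    · exact D1s _ hb
    · exact D02.symm
    · exact D12.symm
    · exact absurd rfl hne
    · exact D2s _ hb
    · exact (D0s _ ha).symm
    · exact (D1s _ ha).symm
    · exact (D2s _ ha).symm
    · exact hdsP _ ha _ hb hne
  · -- sup = univ
    rw [Finset.eq_univ_iff_forall]
    intro i
    rw [Finset.mem_sup]
    obtain ⟨S, hS, hiS⟩ := hcover i
    simp only [List.mem_append, List.mem_cons, List.mem_singleton, List.not_mem_nil,
      or_false] at hS
    rcases hS with (h' | h' | h' | hS) | h'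
    · exact ⟨d0 ∪ A, by rw [hmem]; tauto, Finset.mem_union_left _ (h' ▸ hiS)⟩
    · exact ⟨d1 ∪ Bb, by rw [hmem]; tauto, Finset.mem_union_left _ (h' ▸ hiS)⟩
    · exact ⟨d2 ∪ C, by rw [hmem]; tauto, Finset.mem_union_left _ (h' ▸ hiS)⟩
    · exact ⟨S, by rw [hmem]; tauto, hiS⟩
    · rw [h', ← hU] at hiS
      rcases Finset.mem_union.mp hiS with h' | h'
      · rcases Finset.mem_union.mp h' with h'' | h''
        · exact ⟨d0 ∪ A, by rw [hmem]; tauto, Finset.mem_union_right _ h''⟩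
        · exact ⟨d1 ∪ Bb, by rw [hmem]; tauto, Finset.mem_union_right _ h''⟩
      · exact ⟨d2 ∪ C, by rw [hmem]; tauto, Finset.mem_union_right _ h'⟩
  · -- bot not mem
    intro h
    rw [hmem] at h
    have hne : ∀ d : Finset (Fin n), k ≤ ∑ i ∈ d, x i → ∀ E, (⊥ : Finset (Fin n)) = d ∪ E → False := by
      intro d hd E hE
      have : d = ∅ := by
        have := (Finset.union_eq_empty.mp hE.symm).1
        exact this
      rw [this] at hd
      simp at hd
      omega
    rcases h with h | h | h | h
    · exact hne d0 hf0.1 A h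
    · exact hne d1 hf1.1 Bb h
    · exact hne d2 hf2.1 C h
    · have := (hfs ⊥ h).1
      simp at this
      omega
  · -- coverage: each part has sum ≥ k
    intro S hS
    rw [hmem] at hS
    rcases hS with rfl | rfl | rfl | hS
    · rw [hs0]; omega
    · rw [hs1]; omega
    · rw [hs2]; omega
    · exact (hfs S hS).1
  · -- cost bound
    intro S hS
    have hM : k ≤ max k (Finset.univ.sup x) := le_max_left _ _
    rw [hmem] at hS
    rcases hS with rfl | rfl | rfl | hS
    · rw [hs0]; omega
    · rw [hs1]; omega
    · rw [hs2]; omega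
    · have := hfs S hS; omega
end

section
/- Suppose each bin in a packing contains either zero or exactly two items of size in (k/2, k), except possibly the last bin which contains one such item. If the total number of items of size in (k/2,k) is odd, then any feasible packing of the same items where every bin total is in [k, 6k/5] must have some bin containing at least three items of size in (k/2,k); consequently the optimum cost of the instance is at least 3k/2. -/
open scoped Classical in
/-- With all items of size `< k`, an odd number of large items (size in
`(k/2, k)`), small items (size `≤ k/2`) of total `r < k/2`, and every large
item `x i` satisfying `x i + r < k`: every feasible packing with all bins at
most `6k/5` has a bin with at least three large items, and consequently every
feasible packing has a bin of level at least `3k/2` (so the optimum is at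
least `3k/2`). -/
theorem stmt_12 (n : ℕ) (k : ℝ) (x : Fin n → ℝ) (hk : 0 < k)
    (hx : ∀ i, 0 < x i) (hxk : ∀ i, x i < k)
    (hodd : Odd (Finset.univ.filter (fun i => k / 2 < x i)).card)
    (hsmall : (∑ j ∈ Finset.univ.filter (fun j => x j ≤ k / 2), x j) < k / 2)
    (hbig : ∀ i, k / 2 < x i →
      x i + (∑ j ∈ Finset.univ.filter (fun j => x j ≤ k / 2), x j) < k) :
    (∀ P : Finpartition (Finset.univ : Finset (Fin n)),
        (∀ S ∈ P.parts, k ≤ ∑ i ∈ S, x i) →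
        (∀ S ∈ P.parts, ∑ i ∈ S, x i ≤ 6 * k / 5) →
        ∃ S ∈ P.parts, 3 ≤ (S.filter (fun i => k / 2 < x i)).card) ∧
    ∀ P : Finpartition (Finset.univ : Finset (Fin n)),
      (∀ S ∈ P.parts, k ≤ ∑ i ∈ S, x i) →
      ∃ S ∈ P.parts, 3 * k / 2 ≤ ∑ i ∈ S, x i := by
  classical
  set r := ∑ j ∈ Finset.univ.filter (fun j => x j ≤ k / 2), x j with hr
  -- key: any feasible packing has a part with ≥ 3 large items
  have key : ∀ P : Finpartition (Finset.univ : Finset (Fin n)),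
      (∀ S ∈ P.parts, k ≤ ∑ i ∈ S, x i) →
      ∃ S ∈ P.parts, 3 ≤ (S.filter (fun i => k / 2 < x i)).card := by
    intro P hfeas
    by_contra h
    push_neg at h
    have hcount : ∀ S ∈ P.parts, (S.filter (fun i => k / 2 < x i)).card = 2 := by
      intro S hS
      have h2 : (S.filter (fun i => k / 2 < x i)).card < 3 := by
        exact_mod_cast Nat.lt_of_lt_of_le (Nat.lt_succ_self _)
          (Nat.succ_le_of_lt (Nat.lt_of_not_le (fun hc => absurd (h S hS) (not_lt.mpr hc))))
      -- small items in S sum to at most r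
      have hsmallS : (∑ i ∈ S.filter (fun j => x j ≤ k / 2), x i) ≤ r := by
        apply Finset.sum_le_sum_of_subset_of_nonneg
        · intro i hi
          simp only [Finset.mem_filter, Finset.mem_univ, true_and] at hi ⊢
          exact hi.2
        · intro i _ _; exact (hx i).le
      have hsplit : (∑ i ∈ S, x i) =
          (∑ i ∈ S.filter (fun i => k / 2 < x i), x i) +
          (∑ i ∈ S.filter (fun j => x j ≤ k / 2), x i) := by
        rw [← Finset.sum_filter_add_sum_filter_not S (fun i => k / 2 < x i)]
        congr 1
        apply Finset.sum_congr _ (fun _ _ => rfl)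
        ext i
        simp [not_lt]
      have hge2 : 2 ≤ (S.filter (fun i => k / 2 < x i)).card := by
        by_contra hlt
        push_neg at hlt
        interval_cases hc : (S.filter (fun i => k / 2 < x i)).card
        · -- no large item: total < k
          have he : S.filter (fun i => k / 2 < x i) = ∅ := Finset.card_eq_zero.mp hc
          have : (∑ i ∈ S, x i) < k := by
            rw [hsplit, he]
            simp only [Finset.sum_empty, zero_add]
            calc (∑ i ∈ S.filter (fun j => x j ≤ k / 2), x i) ≤ r := hsmallS
              _ < k / 2 := hsmall
              _ < k := by linarith
          exact absurd (hfeas S hS) (not_le.mpr this)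
        · -- exactly one large item
          obtain ⟨i, hi⟩ := Finset.card_eq_one.mp hc
          have hibig : k / 2 < x i := by
            have : i ∈ S.filter (fun i => k / 2 < x i) := by rw [hi]; simp
            exact (Finset.mem_filter.mp this).2
          have : (∑ i ∈ S, x i) < k := by
            rw [hsplit, hi]
            simp only [Finset.sum_singleton]
            calc x i + (∑ i ∈ S.filter (fun j => x j ≤ k / 2), x i)
                ≤ x i + r := by linarith
              _ < k := hbig i hibig
          exact absurd (hfeas S hS) (not_le.mpr this)
      omega
    -- total count of large items is even: contradiction with oddness
    have hcover : (Finset.univ.filter (fun i => k / 2 < x i)) =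
        P.parts.biUnion (fun S => S.filter (fun i => k / 2 < x i)) := by
      rw [← Finset.filter_biUnion]
      congr 1
      rw [← Finset.sup_eq_biUnion]
      exact P.sup_parts.symm
    have hdisj : ∀ S ∈ P.parts, ∀ T ∈ P.parts, S ≠ T →
        Disjoint (S.filter (fun i => k / 2 < x i)) (T.filter (fun i => k / 2 < x i)) := by
      intro S hS T hT hne
      exact Finset.disjoint_filter_filter (P.disjoint hS hT hne)
    have hcard : (Finset.univ.filter (fun i => k / 2 < x i)).card =
        ∑ S ∈ P.parts, (S.filter (fun i => k / 2 < x i)).card := by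
      rw [hcover]
      exact Finset.card_biUnion hdisj
    rw [hcard, Finset.sum_congr rfl hcount] at hodd
    simp only [Finset.sum_const, smul_eq_mul] at hodd
    exact (Nat.not_odd_iff_even.mpr ⟨P.parts.card, by ring⟩) hodd
  constructor
  · intro P hfeas _
    exact key P hfeas
  · intro P hfeas
    obtain ⟨S, hS, h3⟩ := key P hfeas
    refine ⟨S, hS, ?_⟩
    have h1 : (S.filter (fun i => k / 2 < x i)).card • (k / 2) ≤
        ∑ i ∈ S.filter (fun i => k / 2 < x i), x i :=
      Finset.card_nsmul_le_sum _ _ _ (fun i hi => (Finset.mem_filter.mp hi).2.le)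
    have h2 : (∑ i ∈ S.filter (fun i => k / 2 < x i), x i) ≤ ∑ i ∈ S, x i := by
      apply Finset.sum_le_sum_of_subset_of_nonneg (Finset.filter_subset _ _)
      intro i _ _; exact (hx i).le
    have h4 : (3 : ℝ) * (k / 2) ≤ (S.filter (fun i => k / 2 < x i)).card • (k / 2) := by
      rw [nsmul_eq_mul]
      apply mul_le_mul_of_nonneg_right _ (by linarith)
      exact_mod_cast h3
    linarith
end

section
/- Let x_1,...,x_n be positive reals each at most 1 (scaled so k=1), with ∑ x_i ≥ 1. Given any collection of bins with total contents equal to the full item set, where the maximum bin level is M ≥ 1 and at least one bin has level ≥ 1, repeatedly merging the two lowest-level bins while some bin has level < 1 terminates in a packing where every bin has level in [1, max(2, M + 1)). -/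
/-- One step of the merging procedure: provided some bin has level `< 1`,
replace the two lowest-level bins by their union. -/
def MergeStep (s t : Multiset (Multiset ℝ)) : Prop :=
  (∃ b ∈ s, Multiset.sum b < 1) ∧
  ∃ (u : Multiset (Multiset ℝ)) (a b : Multiset ℝ),
    s = a ::ₘ b ::ₘ u ∧ t = (a + b) ::ₘ u ∧
    ∀ c ∈ u, Multiset.sum a ≤ Multiset.sum c ∧
      Multiset.sum b ≤ Multiset.sum c

lemma exists_min_sum (s : Multiset (Multiset ℝ)) (hs : s ≠ 0) :
    ∃ a ∈ s, ∀ c ∈ s, a.sum ≤ c.sum := by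
  induction s using Multiset.induction with
  | empty => simp at hs
  | cons x s ih =>
    rcases eq_or_ne s 0 with rfl | h
    · exact ⟨x, Multiset.mem_cons_self _ _, by simp⟩
    · obtain ⟨a, ha, hmin⟩ := ih h
      rcases le_total x.sum a.sum with h1 | h1
      · refine ⟨x, Multiset.mem_cons_self _ _, ?_⟩
        intro c hc
        rcases Multiset.mem_cons.mp hc with rfl | hc
        · exact le_refl _
        · exact h1.trans (hmin c hc)
      · refine ⟨a, Multiset.mem_cons_of_mem ha, ?_⟩
        intro c hc
        rcases Multiset.mem_cons.mp hc with rfl | hc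
        · exact h1
        · exact hmin c hc

lemma exists_two_min (s : Multiset (Multiset ℝ)) (h : 2 ≤ Multiset.card s) :
    ∃ a b u, s = a ::ₘ b ::ₘ u ∧
      ∀ c ∈ u, a.sum ≤ c.sum ∧ b.sum ≤ c.sum := by
  obtain ⟨a, ha, hmin⟩ := exists_min_sum s (by
    intro h0; rw [h0] at h; simp at h)
  obtain ⟨s', rfl⟩ := Multiset.exists_cons_of_mem ha
  have hs' : s' ≠ 0 := by
    intro h0; rw [h0] at h; simp at h
  obtain ⟨b, hb, hmin'⟩ := exists_min_sum s' hs'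
  obtain ⟨u, rfl⟩ := Multiset.exists_cons_of_mem hb
  refine ⟨a, b, u, rfl, ?_⟩
  intro c hc
  exact ⟨hmin c (Multiset.mem_cons_of_mem (Multiset.mem_cons_of_mem hc)),
    hmin' c (Multiset.mem_cons_of_mem hc)⟩

lemma merge_aux (M : ℝ) (hM : 1 ≤ M) :
    ∀ n (s : Multiset (Multiset ℝ)), Multiset.card s = n →
    (∀ b ∈ s, (0:ℝ) ≤ Multiset.sum b) →
    (∀ b ∈ s, Multiset.sum b < M + 1) →
    ((∃ c ∈ s, Multiset.sum c < 1) →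
      ∃ d ∈ s, 1 ≤ Multiset.sum d ∧ Multiset.sum d ≤ M) →
    ∃ t, Relation.ReflTransGen MergeStep s t ∧
      (¬ ∃ b ∈ t, Multiset.sum b < 1) ∧
      ∀ b ∈ t, 1 ≤ Multiset.sum b ∧ Multiset.sum b < max 2 (M + 1) := by
  intro n
  induction n using Nat.strong_induction_on with
  | _ n ih =>
    intro s hcard hpos hR hQ
    by_cases hlt : ∃ c ∈ s, Multiset.sum c < 1
    · obtain ⟨d, hd, hd1, hdM⟩ := hQ hlt
      obtain ⟨c0, hc0, hc0lt⟩ := hlt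
      have hne : c0 ≠ d := by
        intro h; rw [h] at hc0lt; linarith
      have h2 : 2 ≤ Multiset.card s := by
        obtain ⟨s1, hs1⟩ := Multiset.exists_cons_of_mem hc0
        have hd2 : d ∈ s1 := by
          rw [hs1] at hd
          rcases Multiset.mem_cons.mp hd with h | h
          · exact absurd h.symm hne
          · exact h
        have h0 : 0 < Multiset.card s1 :=
          Multiset.card_pos.mpr (fun h => by rw [h] at hd2; simp at hd2)
        rw [hs1, Multiset.card_cons]
        omega
      obtain ⟨a, b, u, hs, hmin⟩ := exists_two_min s h2
      subst hs
      -- position of c0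
      have hc0' : Multiset.sum a < 1 ∨ Multiset.sum b < 1 := by
        rcases Multiset.mem_cons.mp hc0 with rfl | hc0
        · exact Or.inl hc0lt
        · rcases Multiset.mem_cons.mp hc0 with rfl | hc0
          · exact Or.inr hc0lt
          · exact Or.inl (lt_of_le_of_lt (hmin c0 hc0).1 hc0lt)
      -- position of d; get the merged bound and Q-preservation info
      have hmerge : Multiset.sum a + Multiset.sum b < M + 1 := by
        rcases Multiset.mem_cons.mp hd with rfl | hd'
        · -- d = a, so sum a ≥ 1; hence sum b < 1
          have hb1 : Multiset.sum b < 1 := by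
            rcases Multiset.mem_cons.mp hc0 with rfl | hc0
            · linarith
            · rcases Multiset.mem_cons.mp hc0 with rfl | hc0
              · exact hc0lt
              · exact lt_of_le_of_lt (hmin c0 hc0).2 hc0lt
          linarith
        · rcases Multiset.mem_cons.mp hd' with rfl | hd''
          · have ha1 : Multiset.sum a < 1 := by
              rcases Multiset.mem_cons.mp hc0 with rfl | hc0
              · exact hc0lt
              · rcases Multiset.mem_cons.mp hc0 with rfl | hc0
                · linarith
                · exact lt_of_le_of_lt (hmin c0 hc0).1 hc0lt
            linarith
          · have hau := (hmin d hd'').1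
            have hbu := (hmin d hd'').2
            rcases hc0' with h1 | h1 <;> linarith
      set t1 : Multiset (Multiset ℝ) := (a + b) ::ₘ u with ht1
      have hstep : MergeStep (a ::ₘ b ::ₘ u) t1 :=
        ⟨⟨c0, hc0, hc0lt⟩, u, a, b, rfl, rfl, hmin⟩
      have hsum_ab : Multiset.sum (a + b) = Multiset.sum a + Multiset.sum b :=
        Multiset.sum_add a b
      have hpos' : ∀ x ∈ t1, (0:ℝ) ≤ Multiset.sum x := by
        intro x hx
        rcases Multiset.mem_cons.mp hx with rfl | hx
        · rw [hsum_ab]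
          have := hpos a (Multiset.mem_cons_self _ _)
          have := hpos b (Multiset.mem_cons_of_mem (Multiset.mem_cons_self _ _))
          linarith
        · exact hpos x (Multiset.mem_cons_of_mem (Multiset.mem_cons_of_mem hx))
      have hR' : ∀ x ∈ t1, Multiset.sum x < M + 1 := by
        intro x hx
        rcases Multiset.mem_cons.mp hx with rfl | hx
        · rw [hsum_ab]; exact hmerge
        · exact hR x (Multiset.mem_cons_of_mem (Multiset.mem_cons_of_mem hx))
      have hQ' : (∃ c ∈ t1, Multiset.sum c < 1) →
          ∃ d' ∈ t1, 1 ≤ Multiset.sum d' ∧ Multiset.sum d' ≤ M := by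
        intro ⟨c', hc', hc'lt⟩
        rcases Multiset.mem_cons.mp hd with rfl | hd'
        · -- d = a : all bins in t1 have sum ≥ 1, contradiction
          exfalso
          rcases Multiset.mem_cons.mp hc' with rfl | hc'
          · rw [hsum_ab] at hc'lt
            have hb0 : (0:ℝ) ≤ Multiset.sum b :=
              hpos b (Multiset.mem_cons_of_mem (Multiset.mem_cons_self _ _))
            linarith
          · have := (hmin c' hc').1; linarith
        · rcases Multiset.mem_cons.mp hd' with rfl | hd''
          · exfalso
            rcases Multiset.mem_cons.mp hc' with rfl | hc'
            · rw [hsum_ab] at hc'lt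
              have ha0 : (0:ℝ) ≤ Multiset.sum a :=
                hpos a (Multiset.mem_cons_self _ _)
              linarith
            · have := (hmin c' hc').2; linarith
          · exact ⟨d, Multiset.mem_cons_of_mem hd'', hd1, hdM⟩
      have hcard' : Multiset.card t1 = n - 1 := by
        simp [ht1] at hcard ⊢
        omega
      have hn : n - 1 < n := by
        simp at hcard
        omega
      obtain ⟨t, htrel, htne, htgood⟩ := ih (n - 1) hn t1 hcard' hpos' hR' hQ'
      exact ⟨t, Relation.ReflTransGen.head hstep htrel, htne, htgood⟩
    · refine ⟨s, Relation.ReflTransGen.refl, hlt, ?_⟩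
      intro b hb
      push_neg at hlt
      refine ⟨hlt b hb, ?_⟩
      have := hR b hb
      have : Multiset.sum b < M + 1 := this
      have h2 : M + 1 ≤ max 2 (M + 1) := le_max_right _ _
      linarith

/-- Starting from bins with items in `(0,1]`, total at least 1, some bin of
level at least 1, and maximum level `M ≥ 1`, repeatedly merging the two
lowest-level bins while some bin has level `< 1` terminates in a packing in
which every bin has level in `[1, max 2 (M+1))`. -/
theorem stmt_16 (bins : Multiset (Multiset ℝ)) (M : ℝ) (hM : 1 ≤ M)
    (hitems : ∀ b ∈ bins, ∀ x ∈ b, 0 < x ∧ x ≤ 1)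
    (htotal : 1 ≤ (bins.map Multiset.sum).sum)
    (hone : ∃ b ∈ bins, 1 ≤ Multiset.sum b)
    (hub : ∀ b ∈ bins, Multiset.sum b ≤ M) :
    ∃ t : Multiset (Multiset ℝ),
      Relation.ReflTransGen MergeStep bins t ∧
      (¬ ∃ b ∈ t, Multiset.sum b < 1) ∧
      ∀ b ∈ t, 1 ≤ Multiset.sum b ∧ Multiset.sum b < max 2 (M + 1) := by
  refine merge_aux M hM (Multiset.card bins) bins rfl ?_ ?_ ?_
  · intro b hb
    exact Multiset.sum_nonneg (fun x hx => (hitems b hb x hx).1.le)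
  · intro b hb
    have := hub b hb
    linarith
  · intro _
    obtain ⟨b, hb, hb1⟩ := hone
    exact ⟨b, hb, hb1, hub b hb⟩
end

section
/- Suppose a greedy completion places small items (each of size ≤ ε) one at a time into the bin of lowest current level, starting from an initial collection of bins whose total eventual content equals the item multiset of a feasible packing P* with all bin totals at most OPT. Then no bin in the greedy completion exceeds level (1+ε)·OPT + ε. -/
/-- One greedy step: the item `y` is added to a bin of currently lowest level. -/
def GreedyStep (b : ℕ) (y : ℝ) (L L' : Fin b → ℝ) : Prop :=
  ∃ i, (∀ j, L i ≤ L j) ∧ L' = Function.update L i (L i + y)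

/-- Greedy completion: the items of `ys` are placed one at a time, each into a
bin of lowest current level. -/
def GreedyRun (b : ℕ) : List ℝ → (Fin b → ℝ) → (Fin b → ℝ) → Prop
  | [], L, L' => L' = L
  | y :: ys, L, L'' => ∃ L', GreedyStep b y L L' ∧ GreedyRun b ys L' L''

/-- Greedily inserting the small items (each of size in `(0, ε]`) of a feasible
packing `P*` with all bin levels at most `OPT` (so bin levels start at most
`OPT` and the total content is that of `P*`, at most `b·OPT`) results in no
bin exceeding level `(1+ε)·OPT + ε`. -/
theorem stmt_19 (b : ℕ) (hb : 0 < b) (ε OPT : ℝ) (hε : 0 < ε)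
    (hOPT : 1 ≤ OPT)
    (L0 : Fin b → ℝ) (ys : List ℝ)
    (hys : ∀ y ∈ ys, 0 < y ∧ y ≤ ε)
    (hL0 : ∀ i, 0 ≤ L0 i ∧ L0 i ≤ OPT)
    (htotal : (∑ i, L0 i) + ys.sum ≤ (b : ℝ) * OPT)
    (L' : Fin b → ℝ) (hrun : GreedyRun b ys L0 L') :
    ∀ i, L' i ≤ (1 + ε) * OPT + ε := by
  have key : ∀ (ys : List ℝ) (L0 : Fin b → ℝ),
      (∀ y ∈ ys, 0 < y ∧ y ≤ ε) → (∀ i, L0 i ≤ OPT + ε) →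
      (∑ i, L0 i) + ys.sum ≤ (b : ℝ) * OPT →
      ∀ L', GreedyRun b ys L0 L' → ∀ i, L' i ≤ OPT + ε := by
    intro ys
    induction ys with
    | nil => intro L0 _ hL hs L' hrun i; simp [GreedyRun] at hrun; subst hrun; exact hL i
    | cons y ys ih =>
      intro L0 hmem hL hs L' hrun i
      obtain ⟨L1, ⟨j, hmin, heq⟩, hrun1⟩ := hrun
      have hy := hmem y (by simp)
      have hrest : 0 ≤ ys.sum := List.sum_nonneg fun z hz => (hmem z (by simp [hz])).1.le
      have hsum0 : ∑ k, L0 k ≤ (b : ℝ) * OPT := by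
        simp only [List.sum_cons] at hs; linarith [hy.1]
      have hminle : L0 j ≤ OPT := by
        have h1 : (b : ℝ) * L0 j ≤ ∑ k, L0 k := by
          calc (b : ℝ) * L0 j = ∑ _k : Fin b, L0 j := by
                simp [Finset.sum_const, mul_comm]
            _ ≤ ∑ k, L0 k := Finset.sum_le_sum fun k _ => hmin k
        have hbpos : (0 : ℝ) < b := by exact_mod_cast hb
        nlinarith
      refine ih L1 (fun z hz => hmem z (by simp [hz])) ?_ ?_ L' hrun1 i
      · intro k
        subst heq
        rcases eq_or_ne k j with rfl | hk
        · simp; linarith [hy.2]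
        · simp [Function.update_of_ne hk]; exact hL k
      · subst heq
        have : ∑ k, Function.update L0 j (L0 j + y) k = (∑ k, L0 k) + y := by
          rw [Finset.sum_update_of_mem (Finset.mem_univ j)]
          have : ∑ k ∈ Finset.univ \ {j}, L0 k = (∑ k, L0 k) - L0 j := by
            rw [Finset.sum_sdiff_eq_sub (by simp)]; simp
          rw [this]; ring
        rw [this]
        simp only [List.sum_cons] at hs; linarith
  have h := key ys L0 hys (fun i => by linarith [(hL0 i).2]) htotal L' hrun
  intro i
  have := h i
  nlinarith
end
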